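/- Let T > 0, Ĥ ∈ (0,1), K > 0, and let φ̂ : (0,2T] → ℝ be differentiable on (0,2T] with |φ̂(u)| ≤ K u^{Ĥ−1/2} and |φ̂′(u)| ≤ K u^{Ĥ−3/2} for all u ∈ (0,2T]. Then there exists a constant C > 0, depending only on T, Ĥ and K, such that for all h ∈ (0,T], (∫₀^h φ̂(t)² dt)^{1/2} ≤ C h^{Ĥ} and (∫₀^T (φ̂(t+h) − φ̂(t))² dt)^{1/2} ≤ C h^{Ĥ}. -/

import Mathlib

open MeasureTheory Set

private lemma int_rpow_Ioc0 {b e : ℝ} (hb : 0 < b) (he : -1 < e) :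
    ∫ t in Set.Ioc (0:ℝ) b, t ^ e = b ^ (e+1) / (e+1) := by
  rw [← intervalIntegral.integral_of_le hb.le, integral_rpow (Or.inl he),
    Real.zero_rpow (by linarith : e + 1 ≠ 0)]
  ring

private lemma int_rpow_Ioc {a b e : ℝ} (ha : 0 < a) (hab : a ≤ b) (he : e ≠ -1) :
    ∫ t in Set.Ioc a b, t ^ e = (b ^ (e+1) - a ^ (e+1)) / (e+1) := by
  rw [← intervalIntegral.integral_of_le hab, integral_rpow]
  exact Or.inr ⟨he, by rw [Set.uIcc_of_le hab]; intro h0; linarith [h0.1]⟩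

private lemma ii_rpow0 {b e : ℝ} (hb : 0 ≤ b) (he : -1 < e) :
    IntegrableOn (fun t : ℝ => t ^ e) (Set.Ioc 0 b) :=
  (intervalIntegrable_iff_integrableOn_Ioc_of_le hb).1
    (intervalIntegral.intervalIntegrable_rpow' he)

private lemma ii_rpow {a b e : ℝ} (ha : 0 < a) (hab : a ≤ b) :
    IntegrableOn (fun t : ℝ => t ^ e) (Set.Ioc a b) := by
  refine (intervalIntegrable_iff_integrableOn_Ioc_of_le hab).1
    (intervalIntegral.intervalIntegrable_rpow (Or.inr ?_))
  rw [Set.uIcc_of_le hab]; intro h0; linarith [h0.1]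

/-- Lemma 3.2 of the paper. -/
theorem stmt_4 (T Hhat K : ℝ) (hT : 0 < T) (hH : Hhat ∈ Set.Ioo (0:ℝ) 1) (hK : 0 < K)
    (φhat φhat' : ℝ → ℝ)
    (hderiv : ∀ u ∈ Set.Ioc (0:ℝ) (2*T), HasDerivAt φhat (φhat' u) u)
    (hbound : ∀ u ∈ Set.Ioc (0:ℝ) (2*T), |φhat u| ≤ K * u ^ (Hhat - 1/2))
    (hbound' : ∀ u ∈ Set.Ioc (0:ℝ) (2*T), |φhat' u| ≤ K * u ^ (Hhat - 3/2)) :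
    ∃ C > 0, ∀ h ∈ Set.Ioc (0:ℝ) T,
      (∫ t in Set.Ioc (0:ℝ) h, (φhat t)^2) ^ ((1:ℝ)/2) ≤ C * h ^ Hhat ∧
      (∫ t in Set.Ioc (0:ℝ) T, (φhat (t + h) - φhat t)^2) ^ ((1:ℝ)/2) ≤ C * h ^ Hhat := by
  obtain ⟨hH0, hH1⟩ := hH
  have hq1 : 0 < 2*Hhat := by linarith
  have hq2 : 0 < 2 - 2*Hhat := by linarith
  set D : ℝ := K^2 * (4 + 4 / (2*Hhat) + 1 / (2 - 2*Hhat)) with hD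
  have hDpos : 0 < D := by
    apply mul_pos (pow_pos hK 2)
    have h1 : 0 < 4 / (2*Hhat) := by positivity
    have h2 : 0 < 1 / (2 - 2*Hhat) := by positivity
    linarith
  -- squared pointwise bounds
  have hsq : ∀ u ∈ Set.Ioc (0:ℝ) (2*T), (φhat u)^2 ≤ K^2 * u ^ (2*Hhat - 1) := by
    intro u hu
    have hu0 : 0 < u := hu.1
    have h1 : (φhat u)^2 ≤ (K * u ^ (Hhat - 1/2))^2 := by
      rw [← sq_abs]
      exact pow_le_pow_left₀ (abs_nonneg _) (hbound u hu) 2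
    have h2 : u ^ (Hhat - 1/2) * u ^ (Hhat - 1/2) = u ^ (2*Hhat - 1) := by
      rw [← Real.rpow_add hu0]; ring_nf
    calc (φhat u)^2 ≤ (K * u ^ (Hhat - 1/2))^2 := h1
      _ = K^2 * (u ^ (Hhat - 1/2) * u ^ (Hhat - 1/2)) := by ring
      _ = K^2 * u ^ (2*Hhat - 1) := by rw [h2]
  have hsq' : ∀ u ∈ Set.Ioc (0:ℝ) (2*T), (φhat' u)^2 ≤ K^2 * u ^ (2*Hhat - 3) := by
    intro u hu
    have hu0 : 0 < u := hu.1
    have h1 : (φhat' u)^2 ≤ (K * u ^ (Hhat - 3/2))^2 := by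
      rw [← sq_abs]
      exact pow_le_pow_left₀ (abs_nonneg _) (hbound' u hu) 2
    have h2 : u ^ (Hhat - 3/2) * u ^ (Hhat - 3/2) = u ^ (2*Hhat - 3) := by
      rw [← Real.rpow_add hu0]; ring_nf
    calc (φhat' u)^2 ≤ (K * u ^ (Hhat - 3/2))^2 := h1
      _ = K^2 * (u ^ (Hhat - 3/2) * u ^ (Hhat - 3/2)) := by ring
      _ = K^2 * u ^ (2*Hhat - 3) := by rw [h2]
  refine ⟨D ^ ((1:ℝ)/2), Real.rpow_pos_of_pos hDpos _, ?_⟩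
  rintro h ⟨hh0, hhT⟩
  have hhpos := hh0
  have hfinal : ∀ x : ℝ, 0 ≤ x → x ≤ D * h ^ (2*Hhat) →
      x ^ ((1:ℝ)/2) ≤ D ^ ((1:ℝ)/2) * h ^ Hhat := by
    intro x hx0 hx
    calc x ^ ((1:ℝ)/2) ≤ (D * h ^ (2*Hhat)) ^ ((1:ℝ)/2) :=
        Real.rpow_le_rpow hx0 hx (by norm_num)
      _ = D ^ ((1:ℝ)/2) * (h ^ (2*Hhat)) ^ ((1:ℝ)/2) :=
        Real.mul_rpow hDpos.le (Real.rpow_nonneg hh0.le _)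
      _ = D ^ ((1:ℝ)/2) * h ^ Hhat := by
        rw [← Real.rpow_mul hh0.le, show 2*Hhat*((1:ℝ)/2) = Hhat by ring]
  -- Part 1
  have key1 : ∫ t in Set.Ioc (0:ℝ) h, (φhat t)^2 ≤ D * h ^ (2*Hhat) := by
    have hgint : IntegrableOn (fun t : ℝ => K^2 * t ^ (2*Hhat - 1)) (Set.Ioc 0 h) :=
      (ii_rpow0 hh0.le (by linarith)).const_mul _
    have hmono := integral_mono_of_nonneg
      (ae_restrict_of_forall_mem measurableSet_Ioc
        (fun t _ => sq_nonneg (φhat t)))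
      hgint
      (ae_restrict_of_forall_mem measurableSet_Ioc
        (fun t ht => hsq t ⟨ht.1, by linarith [ht.2]⟩))
    have hval : ∫ t in Set.Ioc (0:ℝ) h, K^2 * t ^ (2*Hhat - 1)
        = K^2 * (h ^ (2*Hhat) / (2*Hhat)) := by
      rw [integral_const_mul, int_rpow_Ioc0 hh0 (by linarith)]
      norm_num
    rw [hval] at hmono
    refine hmono.trans ?_
    have hc : K^2 / (2*Hhat) ≤ D := by
      rw [hD]
      have h1 : (1:ℝ)/(2*Hhat) ≤ 4/(2*Hhat) := by gcongr; norm_num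
      have h2 : 0 < 1 / (2 - 2*Hhat) := by positivity
      have h3 : 0 ≤ K^2 := sq_nonneg K
      calc K^2/(2*Hhat) = K^2 * (1/(2*Hhat)) := by ring
        _ ≤ K^2 * (4 + 4/(2*Hhat) + 1/(2 - 2*Hhat)) :=
            mul_le_mul_of_nonneg_left (by linarith) h3
    calc K^2 * (h ^ (2*Hhat) / (2*Hhat)) = (K^2/(2*Hhat)) * h ^ (2*Hhat) := by ring
      _ ≤ D * h ^ (2*Hhat) :=
        mul_le_mul_of_nonneg_right hc (Real.rpow_nonneg hh0.le _)
  -- Part 2 pointwise bounds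
  have hb1 : ∀ t ∈ Set.Ioc (0:ℝ) h, (φhat (t + h) - φhat t)^2
      ≤ 2*K^2*(2*h) ^ (2*Hhat-1) + 4*K^2 * t ^ (2*Hhat-1) := by
    intro t ht
    have ht0 : 0 < t := ht.1
    have hth : t + h ∈ Set.Ioc (0:ℝ) (2*T) := ⟨by linarith, by linarith [ht.2]⟩
    have h1 := hsq _ hth
    have h2 := hsq t ⟨ht0, by linarith [ht.2]⟩
    have h3 : (t+h) ^ (2*Hhat-1) ≤ (2*h) ^ (2*Hhat-1) + t ^ (2*Hhat-1) := by
      rcases le_or_gt 0 (2*Hhat-1) with he | he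
      · have ha : (t+h) ^ (2*Hhat-1) ≤ (2*h) ^ (2*Hhat-1) :=
          Real.rpow_le_rpow (by linarith) (by linarith [ht.2]) he
        have hb : 0 ≤ t ^ (2*Hhat-1) := Real.rpow_nonneg ht0.le _
        linarith
      · have ha : (t+h) ^ (2*Hhat-1) ≤ t ^ (2*Hhat-1) :=
          Real.rpow_le_rpow_of_nonpos ht0 (by linarith) he.le
        have hb : 0 ≤ (2*h) ^ (2*Hhat-1) := Real.rpow_nonneg (by linarith) _
        linarith
    nlinarith [sq_nonneg (φhat (t+h) + φhat t),
      mul_le_mul_of_nonneg_left h3 (sq_nonneg K)]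
  have hb2 : ∀ t ∈ Set.Ioc h T, (φhat (t + h) - φhat t)^2
      ≤ K^2 * h^2 * t ^ (2*Hhat-3) := by
    intro t ht
    have ht0 : 0 < t := lt_trans hh0 ht.1
    have hlt : t < t + h := by linarith
    have hcont : ContinuousOn φhat (Set.Icc t (t+h)) := fun u hu =>
      ((hderiv u ⟨lt_of_lt_of_le ht0 hu.1, by linarith [hu.2, ht.2]⟩).continuousAt).continuousWithinAt
    obtain ⟨c, hc, hc'⟩ := exists_hasDerivAt_eq_slope φhat φhat' hlt hcont
      (fun u hu => hderiv u ⟨lt_trans ht0 hu.1, by linarith [hu.2.le, ht.2]⟩)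
    have hcmem : c ∈ Set.Ioc (0:ℝ) (2*T) := ⟨lt_trans ht0 hc.1, by linarith [hc.2, ht.2]⟩
    have hdiff : φhat (t+h) - φhat t = h * φhat' c := by
      rw [hc', show t + h - t = h by ring]
      field_simp
    have h4 := hsq' c hcmem
    have h5 : c ^ (2*Hhat-3) ≤ t ^ (2*Hhat-3) :=
      Real.rpow_le_rpow_of_nonpos ht0 hc.1.le (by linarith)
    calc (φhat (t+h) - φhat t)^2 = h^2 * (φhat' c)^2 := by rw [hdiff]; ring
      _ ≤ h^2 * (K^2 * t ^ (2*Hhat-3)) := by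
          refine mul_le_mul_of_nonneg_left (h4.trans ?_) (sq_nonneg h)
          exact mul_le_mul_of_nonneg_left h5 (sq_nonneg K)
      _ = K^2 * h^2 * t ^ (2*Hhat-3) := by ring
  -- measurability
  have hcon : ContinuousOn (fun t => (φhat (t + h) - φhat t)^2) (Set.Ioc (0:ℝ) T) := by
    intro t ht
    have h1 : ContinuousAt φhat (t+h) :=
      (hderiv _ ⟨by linarith [ht.1], by linarith [ht.2]⟩).continuousAt
    have h2 : ContinuousAt φhat t := (hderiv _ ⟨ht.1, by linarith [ht.2]⟩).continuousAt
    have h3 : ContinuousAt (fun s : ℝ => φhat (s + h)) t :=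
      ContinuousAt.comp (g := φhat) h1 (continuousAt_id.add continuousAt_const)
    exact ((h3.sub h2).pow 2).continuousWithinAt
  have hmeas1 : AEStronglyMeasurable (fun t => (φhat (t + h) - φhat t)^2)
      (volume.restrict (Set.Ioc (0:ℝ) h)) :=
    (hcon.mono (Set.Ioc_subset_Ioc_right hhT)).aestronglyMeasurable measurableSet_Ioc
  have hmeas2 : AEStronglyMeasurable (fun t => (φhat (t + h) - φhat t)^2)
      (volume.restrict (Set.Ioc h T)) :=
    (hcon.mono (Set.Ioc_subset_Ioc_left hh0.le)).aestronglyMeasurable measurableSet_Ioc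
  -- integrability of dominators
  have hg1 : IntegrableOn
      (fun t : ℝ => 2*K^2*(2*h) ^ (2*Hhat-1) + 4*K^2 * t ^ (2*Hhat-1)) (Set.Ioc 0 h) := by
    apply Integrable.add
    · exact integrableOn_const measure_Ioc_lt_top.ne
    · exact (ii_rpow0 hh0.le (by linarith)).const_mul _
  have hg2 : IntegrableOn (fun t : ℝ => K^2 * h^2 * t ^ (2*Hhat-3)) (Set.Ioc h T) :=
    (ii_rpow hh0 hhT).const_mul _
  have hf1 : IntegrableOn (fun t => (φhat (t + h) - φhat t)^2) (Set.Ioc 0 h) := by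
    refine Integrable.mono' hg1 hmeas1
      (ae_restrict_of_forall_mem measurableSet_Ioc (fun t ht => ?_))
    rw [Real.norm_eq_abs, abs_of_nonneg (sq_nonneg _)]
    exact hb1 t ht
  have hf2 : IntegrableOn (fun t => (φhat (t + h) - φhat t)^2) (Set.Ioc h T) := by
    refine Integrable.mono' hg2 hmeas2
      (ae_restrict_of_forall_mem measurableSet_Ioc (fun t ht => ?_))
    rw [Real.norm_eq_abs, abs_of_nonneg (sq_nonneg _)]
    exact hb2 t ht
  -- split the integral
  have hsplit : ∫ t in Set.Ioc (0:ℝ) T, (φhat (t + h) - φhat t)^2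
      = (∫ t in Set.Ioc (0:ℝ) h, (φhat (t + h) - φhat t)^2)
        + ∫ t in Set.Ioc h T, (φhat (t + h) - φhat t)^2 := by
    rw [← Set.Ioc_union_Ioc_eq_Ioc hh0.le hhT]
    exact setIntegral_union (Set.Ioc_disjoint_Ioc_of_le le_rfl) measurableSet_Ioc hf1 hf2
  -- bound piece 1
  have i1 : ∫ t in Set.Ioc (0:ℝ) h, (φhat (t + h) - φhat t)^2
      ≤ 2*K^2*(2*h) ^ (2*Hhat-1) * h + 4*K^2 * (h ^ (2*Hhat) / (2*Hhat)) := by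
    have hmono := integral_mono_of_nonneg
      (ae_restrict_of_forall_mem measurableSet_Ioc (fun t _ => sq_nonneg _))
      hg1
      (ae_restrict_of_forall_mem measurableSet_Ioc hb1)
    refine hmono.trans (le_of_eq ?_)
    rw [integral_add ((integrableOn_const (C := 2*K^2*(2*h) ^ (2*Hhat-1)) (s := Set.Ioc (0:ℝ) h) (μ := volume) measure_Ioc_lt_top.ne).integrable)
      ((ii_rpow0 (e := 2*Hhat-1) hh0.le (by linarith)).const_mul _)]
    rw [setIntegral_const, integral_const_mul, int_rpow_Ioc0 hh0 (by linarith)]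
    rw [measureReal_def, Real.volume_Ioc]
    rw [show 2*Hhat - 1 + 1 = 2*Hhat by ring]
    rw [ENNReal.toReal_ofReal (by linarith)]
    simp [smul_eq_mul]
    ring
  -- bound piece 2
  have i2 : ∫ t in Set.Ioc h T, (φhat (t + h) - φhat t)^2
      ≤ K^2 * h^2 * (h ^ (2*Hhat-2) / (2 - 2*Hhat)) := by
    have hmono := integral_mono_of_nonneg
      (ae_restrict_of_forall_mem measurableSet_Ioc (fun t _ => sq_nonneg _))
      hg2
      (ae_restrict_of_forall_mem measurableSet_Ioc hb2)
    refine hmono.trans ?_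
    rw [integral_const_mul, int_rpow_Ioc hh0 hhT (by intro hc; norm_num at hc; linarith)]
    rw [show 2*Hhat - 3 + 1 = 2*Hhat - 2 by ring]
    have hTa : (0:ℝ) ≤ T ^ (2*Hhat-2) := Real.rpow_nonneg hT.le _
    have heq : (T ^ (2*Hhat-2) - h ^ (2*Hhat-2)) / (2*Hhat-2)
        = (h ^ (2*Hhat-2) - T ^ (2*Hhat-2)) / (2 - 2*Hhat) := by
      rw [div_eq_div_iff (by linarith) (by linarith)]; ring
    rw [heq]
    have hle : (h ^ (2*Hhat-2) - T ^ (2*Hhat-2)) / (2 - 2*Hhat)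
        ≤ h ^ (2*Hhat-2) / (2 - 2*Hhat) :=
      (div_le_div_iff_of_pos_right hq2).2 (sub_le_self _ hTa)
    exact mul_le_mul_of_nonneg_left hle (by positivity)
  -- combine
  have key2 : ∫ t in Set.Ioc (0:ℝ) T, (φhat (t + h) - φhat t)^2 ≤ D * h ^ (2*Hhat) := by
    rw [hsplit]
    have e1 : 2*K^2*(2*h) ^ (2*Hhat-1) * h ≤ 4*K^2 * h ^ (2*Hhat) := by
      have h2h : (2*h) ^ (2*Hhat-1) = 2 ^ (2*Hhat-1) * h ^ (2*Hhat-1) :=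
        Real.mul_rpow (by norm_num) hh0.le
      have h2e : (2:ℝ) ^ (2*Hhat-1) ≤ 2 := by
        calc (2:ℝ) ^ (2*Hhat-1) ≤ (2:ℝ) ^ (1:ℝ) :=
            Real.rpow_le_rpow_of_exponent_le (by norm_num) (by linarith)
          _ = 2 := Real.rpow_one 2
      have h2nn : (0:ℝ) ≤ 2 ^ (2*Hhat-1) := Real.rpow_nonneg (by norm_num) _
      have hprod : h ^ (2*Hhat-1) * h = h ^ (2*Hhat) := by
        rw [← Real.rpow_add_one hh0.ne']; ring_nf
      calc 2*K^2*(2*h) ^ (2*Hhat-1) * h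
          = 2*K^2 * (2 ^ (2*Hhat-1)) * (h ^ (2*Hhat-1) * h) := by rw [h2h]; ring
        _ = 2*K^2 * (2 ^ (2*Hhat-1)) * h ^ (2*Hhat) := by rw [hprod]
        _ ≤ 2*K^2 * 2 * h ^ (2*Hhat) := by
            apply mul_le_mul_of_nonneg_right _ (Real.rpow_nonneg hh0.le _)
            nlinarith [sq_nonneg K]
        _ = 4*K^2 * h ^ (2*Hhat) := by ring
    have e3 : K^2*h^2*(h ^ (2*Hhat-2) / (2 - 2*Hhat))
        = (K^2/(2 - 2*Hhat)) * h ^ (2*Hhat) := by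
      have hpp : h^2 * h ^ (2*Hhat-2) = h ^ (2*Hhat) := by
        rw [← Real.rpow_natCast h 2, ← Real.rpow_add hh0]
        norm_num
      calc K^2*h^2*(h ^ (2*Hhat-2) / (2 - 2*Hhat))
          = (K^2/(2 - 2*Hhat)) * (h^2 * h ^ (2*Hhat-2)) := by ring
        _ = (K^2/(2 - 2*Hhat)) * h ^ (2*Hhat) := by rw [hpp]
    have hDexp : D * h ^ (2*Hhat) = 4*K^2 * h ^ (2*Hhat)
        + (4*K^2/(2*Hhat)) * h ^ (2*Hhat) + (K^2/(2 - 2*Hhat)) * h ^ (2*Hhat) := by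
      rw [hD]; ring
    have e2 : 4*K^2 * (h ^ (2*Hhat) / (2*Hhat)) = (4*K^2/(2*Hhat)) * h ^ (2*Hhat) := by
      ring
    linarith [i1, i2, e1, e2, e3, hDexp]
  constructor
  · exact hfinal _ (integral_nonneg fun t => sq_nonneg _) key1
  · exact hfinal _ (integral_nonneg fun t => sq_nonneg _) key2
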